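/- arXiv:2104.03711 — 3 statements merged into one kernel-verified Lean document; each statement's English description precedes it below -/
import Mathlib

section
/- Let v₁, v₂ ∈ ℝ² be linearly independent vectors and let L = {m·v₁ + n·v₂ : m, n ∈ ℤ} be the lattice they generate. For every lattice point p ∈ L and every integer k ≥ 1, the k-th order Voronoi region of p, R_k(p) = {x ∈ ℝ² : #{q ∈ L, q ≠ p : ‖x − q‖ < ‖x − p‖} = k − 1}, has Lebesgue measure equal to |det(v₁, v₂)| (the area of a fundamental domain of the lattice). In particular this measure is the same for every p ∈ L and every k ≥ 1. -/
open MeasureTheory Set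

namespace Stmt2Aux

variable {E : Type*} [NormedAddCommGroup E]

lemma mem_cb {x q : E} {R : ℝ} (h : ‖x - q‖ ≤ R) : q ∈ Metric.closedBall x R := by
  rw [Metric.mem_closedBall, dist_comm, dist_eq_norm]; exact h

lemma closer_eq (L : Set E) (x p : E) :
    {q ∈ L | q ≠ p ∧ ‖x - q‖ < ‖x - p‖} = {q ∈ L | ‖x - q‖ < ‖x - p‖} := by
  ext q
  simp only [Set.mem_sep_iff, and_assoc]
  refine ⟨fun h => ⟨h.1, h.2.2⟩, fun h => ⟨h.1, fun hqp => ?_, h.2⟩⟩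
  subst hqp; exact lt_irrefl _ h.2

lemma closer_subset (L : Set E) (x p : E) :
    {q ∈ L | ‖x - q‖ < ‖x - p‖} ⊆ L ∩ Metric.closedBall x ‖x - p‖ :=
  fun q hq => ⟨hq.1, mem_cb hq.2.le⟩

lemma exists_kth (L : Set E) (x : E)
    (hinf : L.Infinite)
    (hfin : ∀ R : ℝ, (L ∩ Metric.closedBall x R).Finite)
    (hd : ∀ q ∈ L, ∀ q' ∈ L, ‖x - q‖ = ‖x - q'‖ → q = q') :
    ∀ k : ℕ, ∃ p ∈ L, {q ∈ L | ‖x - q‖ < ‖x - p‖}.ncard = k := by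
  intro k
  induction k with
  | zero =>
      obtain ⟨q₀, hq₀⟩ := hinf.nonempty
      have hF : (L ∩ Metric.closedBall x ‖x - q₀‖).Finite := hfin _
      obtain ⟨p, hpF, hmin⟩ := Set.exists_min_image _ (fun q => ‖x - q‖) hF
        ⟨q₀, hq₀, mem_cb le_rfl⟩
      refine ⟨p, hpF.1, ?_⟩
      rw [Set.ncard_eq_zero ((hfin _).subset (closer_subset L x p))]
      ext q
      simp only [Set.mem_sep_iff, Set.mem_empty_iff_false, iff_false, not_and]
      intro hqL hlt
      exact absurd (hmin q ⟨hqL, mem_cb (hlt.le.trans (hmin q₀ ⟨hq₀, mem_cb le_rfl⟩))⟩)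
        (not_le.mpr hlt)
  | succ k ih =>
      obtain ⟨p, hpL, hpcard⟩ := ih
      have hT : ∃ q₀ ∈ L, ‖x - p‖ < ‖x - q₀‖ := by
        by_contra h
        push_neg at h
        exact hinf ((hfin ‖x - p‖).subset fun q hq => ⟨hq, mem_cb (h q hq)⟩)
      obtain ⟨q₀, hq₀L, hq₀⟩ := hT
      have hF : {q ∈ L | ‖x - p‖ < ‖x - q‖ ∧ ‖x - q‖ ≤ ‖x - q₀‖}.Finite :=
        (hfin ‖x - q₀‖).subset fun q hq => ⟨hq.1, mem_cb hq.2.2⟩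
      obtain ⟨p', hp'F, hmin⟩ := Set.exists_min_image _ (fun q => ‖x - q‖) hF
        ⟨q₀, hq₀L, hq₀, le_rfl⟩
      obtain ⟨hp'L, hpp', -⟩ := hp'F
      refine ⟨p', hp'L, ?_⟩
      have hset : {q ∈ L | ‖x - q‖ < ‖x - p'‖} = insert p {q ∈ L | ‖x - q‖ < ‖x - p‖} := by
        ext q
        simp only [Set.mem_sep_iff, Set.mem_insert_iff]
        constructor
        · rintro ⟨hqL, hlt⟩
          rcases lt_trichotomy ‖x - q‖ ‖x - p‖ with h | h | h
          · exact Or.inr ⟨hqL, h⟩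
          · exact Or.inl (hd q hqL p hpL h)
          · exact absurd (hmin q ⟨hqL, h, hlt.le.trans (hmin q₀ ⟨hq₀L, hq₀, le_rfl⟩)⟩)
              (not_le.mpr hlt)
        · rintro (rfl | ⟨hqL, hlt⟩)
          · exact ⟨hpL, hpp'⟩
          · exact ⟨hqL, hlt.trans hpp'⟩
      rw [hset, Set.ncard_insert_of_notMem (fun h => lt_irrefl _ h.2)
        ((hfin _).subset (closer_subset L x p)), hpcard]

lemma ncard_lt_of_closer (L : Set E) (x : E)
    (hfin : ∀ R : ℝ, (L ∩ Metric.closedBall x R).Finite)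
    {p p' : E} (hpL : p ∈ L) (h : ‖x - p‖ < ‖x - p'‖) :
    {q ∈ L | ‖x - q‖ < ‖x - p‖}.ncard < {q ∈ L | ‖x - q‖ < ‖x - p'‖}.ncard := by
  have hsub : insert p {q ∈ L | ‖x - q‖ < ‖x - p‖} ⊆ {q ∈ L | ‖x - q‖ < ‖x - p'‖} := by
    rintro q (rfl | ⟨hqL, hlt⟩)
    · exact ⟨hpL, h⟩
    · exact ⟨hqL, hlt.trans h⟩
  calc {q ∈ L | ‖x - q‖ < ‖x - p‖}.ncard
      < (insert p {q ∈ L | ‖x - q‖ < ‖x - p‖}).ncard := by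
        rw [Set.ncard_insert_of_notMem (fun hc => lt_irrefl _ hc.2)
          ((hfin _).subset (closer_subset L x p))]
        omega
    _ ≤ _ := Set.ncard_le_ncard hsub ((hfin _).subset (closer_subset L x p'))

lemma unique_kth (L : Set E) (x : E)
    (hfin : ∀ R : ℝ, (L ∩ Metric.closedBall x R).Finite)
    (hd : ∀ q ∈ L, ∀ q' ∈ L, ‖x - q‖ = ‖x - q'‖ → q = q')
    {p p' : E} (hpL : p ∈ L) (hp'L : p' ∈ L)
    (h : {q ∈ L | ‖x - q‖ < ‖x - p‖}.ncard = {q ∈ L | ‖x - q‖ < ‖x - p'‖}.ncard) :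
    p = p' := by
  rcases lt_trichotomy ‖x - p‖ ‖x - p'‖ with hlt | he | hgt
  · exact absurd h (ne_of_lt (ncard_lt_of_closer L x hfin hpL hlt))
  · exact hd p hpL p' hp'L he
  · exact absurd h.symm (ne_of_lt (ncard_lt_of_closer L x hfin hp'L hgt))



variable {E : Type*} [NormedAddCommGroup E] [MeasurableSpace E] [OpensMeasurableSpace E]

lemma measurable_cond (p q : E) : MeasurableSet {x : E | ‖x - q‖ < ‖x - p‖} :=
  measurableSet_lt
    ((continuous_id.sub continuous_const).norm.measurable)
    ((continuous_id.sub continuous_const).norm.measurable)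

lemma measurable_region (L : Set E) (hc : L.Countable)
    (hfin : ∀ x : E, ∀ R : ℝ, (L ∩ Metric.closedBall x R).Finite)
    (p : E) (j : ℕ) :
    MeasurableSet {x : E | {q ∈ L | ‖x - q‖ < ‖x - p‖}.ncard = j} := by
  have hCfin : ∀ x : E, {q ∈ L | ‖x - q‖ < ‖x - p‖}.Finite :=
    fun x => (hfin x _).subset (closer_subset L x p)
  have key : {x : E | {q ∈ L | ‖x - q‖ < ‖x - p‖}.ncard = j}
      = ⋃ F ∈ {F : Set E | (F.Finite ∧ F ⊆ L) ∧ F.ncard = j},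
          {x : E | {q ∈ L | ‖x - q‖ < ‖x - p‖} = F} := by
    ext x
    simp only [Set.mem_setOf_eq, Set.mem_iUnion, exists_prop]
    constructor
    · intro hx
      exact ⟨{q ∈ L | ‖x - q‖ < ‖x - p‖}, ⟨⟨hCfin x, fun q hq => hq.1⟩, hx⟩, rfl⟩
    · rintro ⟨F, ⟨-, hcard⟩, hF⟩
      rw [hF, hcard]
  rw [key]
  refine MeasurableSet.biUnion (((countable_setOf_finite_subset hc).mono
    (fun F hF => ?_)).mono (Set.sep_subset _ _)) ?_
  · exact ⟨hF.1, hF.2⟩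
  rintro F ⟨⟨hFfin, hFL⟩, -⟩
  have : {x : E | {q ∈ L | ‖x - q‖ < ‖x - p‖} = F}
      = (⋂ q ∈ F, {x : E | ‖x - q‖ < ‖x - p‖})
        ∩ (⋂ q ∈ L \ F, {x : E | ‖x - q‖ < ‖x - p‖}ᶜ) := by
    ext x
    simp only [Set.mem_setOf_eq, Set.mem_inter_iff, Set.mem_iInter, Set.mem_compl_iff,
      Set.mem_diff]
    constructor
    · rintro rfl
      exact ⟨fun q hq => hq.2, fun q hq hlt => hq.2 ⟨hq.1, hlt⟩⟩
    · rintro ⟨h1, h2⟩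
      ext q
      simp only [Set.mem_sep_iff]
      constructor
      · rintro ⟨hqL, hlt⟩
        by_contra hqF
        exact h2 q ⟨hqL, hqF⟩ hlt
      · intro hqF
        exact ⟨hFL hqF, h1 q hqF⟩
  rw [this]
  exact (MeasurableSet.biInter hFfin.countable fun q _ => measurable_cond p q).inter
    (MeasurableSet.biInter (hc.mono Set.diff_subset) fun q _ => (measurable_cond p q).compl)


end Stmt2Aux

open Submodule Pointwise

/-- In the lattice generated by linearly independent `v₁, v₂ ∈ ℝ²`, the k-th order Voronoi
region of any lattice point `p` has Lebesgue measure `|det(v₁, v₂)|`, for every `k ≥ 1`. -/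
theorem stmt_2 (v₁ v₂ : EuclideanSpace ℝ (Fin 2))
    (hindep : LinearIndependent ℝ ![v₁, v₂])
    (L : Set (EuclideanSpace ℝ (Fin 2)))
    (hL : L = {q | ∃ m n : ℤ, q = m • v₁ + n • v₂})
    (p : EuclideanSpace ℝ (Fin 2)) (hp : p ∈ L) (k : ℕ) (hk : 1 ≤ k) :
    volume {x : EuclideanSpace ℝ (Fin 2) |
        {q ∈ L | q ≠ p ∧ ‖x - q‖ < ‖x - p‖}.ncard = k - 1}
      = ENNReal.ofReal |v₁ 0 * v₂ 1 - v₁ 1 * v₂ 0| := by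
  classical
  have hcard : Fintype.card (Fin 2) = Module.finrank ℝ (EuclideanSpace ℝ (Fin 2)) := by simp
  set b : Module.Basis (Fin 2) ℝ (EuclideanSpace ℝ (Fin 2)) :=
    basisOfLinearIndependentOfCardEqFinrank hindep hcard with hbdef
  have hb : ⇑b = ![v₁, v₂] := coe_basisOfLinearIndependentOfCardEqFinrank hindep hcard
  have hrange : Set.range (![v₁, v₂] : Fin 2 → EuclideanSpace ℝ (Fin 2)) = {v₁, v₂} := by
    ext w
    constructor
    · rintro ⟨i, rfl⟩; fin_cases i <;> simp
    · rintro (rfl | rfl)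
      exacts [⟨0, rfl⟩, ⟨1, rfl⟩]
  have hLspan : L = (span ℤ (Set.range ⇑b) : Set (EuclideanSpace ℝ (Fin 2))) := by
    rw [hL, hb, hrange]
    ext q
    simp only [SetLike.mem_coe, Submodule.mem_span_pair, Set.mem_setOf_eq]
    exact ⟨fun ⟨m, n, h⟩ => ⟨m, n, h.symm⟩, fun ⟨m, n, h⟩ => ⟨m, n, h.symm⟩⟩
  have hLc : L.Countable := by
    rw [hL]
    have : {q : EuclideanSpace ℝ (Fin 2) | ∃ m n : ℤ, q = m • v₁ + n • v₂}
        = Set.range (fun mn : ℤ × ℤ => mn.1 • v₁ + mn.2 • v₂) := by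
      ext q
      constructor
      · rintro ⟨m, n, rfl⟩; exact ⟨(m, n), rfl⟩
      · rintro ⟨⟨m, n⟩, rfl⟩; exact ⟨m, n, rfl⟩
    rw [this]
    exact Set.countable_range _
  have hv₁ : v₁ ≠ 0 := by simpa using hindep.ne_zero 0
  have hLinf : L.Infinite := by
    rw [hL]
    refine Set.infinite_of_injective_forall_mem (f := fun m : ℤ => m • v₁) ?_ ?_
    · intro m m' h
      have h' : (m : ℝ) • v₁ = (m' : ℝ) • v₁ := by
        rw [Int.cast_smul_eq_zsmul, Int.cast_smul_eq_zsmul]; exact h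
      exact_mod_cast smul_left_injective ℝ hv₁ h'
    · intro m
      exact ⟨m, 0, by simp⟩
  have hLfin : ∀ x : EuclideanSpace ℝ (Fin 2), ∀ R : ℝ,
      (L ∩ Metric.closedBall x R).Finite := by
    intro x R
    rw [hLspan]
    haveI : DiscreteTopology
        ((span ℤ (Set.range ⇑b) : Set (EuclideanSpace ℝ (Fin 2))) : Set _) :=
      inferInstanceAs (DiscreteTopology (span ℤ (Set.range ⇑b)))
    have hclosed : IsClosed (span ℤ (Set.range ⇑b) : Set (EuclideanSpace ℝ (Fin 2))) :=
      AddSubgroup.isClosed_of_discrete (H := (span ℤ (Set.range ⇑b)).toAddSubgroup)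
    exact (Metric.finite_isBounded_inter_isClosed DiscreteTopology.isDiscrete Metric.isBounded_closedBall
      hclosed).subset fun y hy => ⟨hy.2, hy.1⟩
  -- the tie set
  set Z : Set (EuclideanSpace ℝ (Fin 2)) :=
    ⋃ q ∈ L, ⋃ q' ∈ L, {x | q ≠ q' ∧ ‖x - q‖ = ‖x - q'‖} with hZdef
  have hZmeas : MeasurableSet Z := by
    refine MeasurableSet.biUnion hLc fun q _ => MeasurableSet.biUnion hLc fun q' _ => ?_
    rcases eq_or_ne q q' with rfl | hne
    · simp
    · have : {x : EuclideanSpace ℝ (Fin 2) | q ≠ q' ∧ ‖x - q‖ = ‖x - q'‖}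
          = {x | ‖x - q‖ = ‖x - q'‖} := by
        ext x; simp [hne]
      rw [this]
      exact measurableSet_eq_fun
        ((continuous_id.sub continuous_const).norm.measurable)
        ((continuous_id.sub continuous_const).norm.measurable)
  have hZnull : volume Z = 0 := by
    rw [hZdef, measure_biUnion_null_iff hLc]
    intro q hq
    rw [measure_biUnion_null_iff hLc]
    intro q' hq'
    rcases eq_or_ne q q' with rfl | hne
    · simp
    · have hset : {x : EuclideanSpace ℝ (Fin 2) | q ≠ q' ∧ ‖x - q‖ = ‖x - q'‖}
          = (AffineSubspace.perpBisector q q' : Set (EuclideanSpace ℝ (Fin 2))) := by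
        ext x
        simp [AffineSubspace.mem_perpBisector_iff_dist_eq, hne, dist_eq_norm]
      rw [hset]
      refine MeasureTheory.Measure.addHaar_affineSubspace _ _ fun htop => hne ?_
      have hmem : q ∈ AffineSubspace.perpBisector q q' := htop ▸ AffineSubspace.mem_top _ _ _
      rw [AffineSubspace.mem_perpBisector_iff_dist_eq] at hmem
      simpa [dist_self, eq_comm, dist_eq_zero] using hmem
  have hZx : ∀ x ∉ Z, ∀ q ∈ L, ∀ q' ∈ L, ‖x - q‖ = ‖x - q'‖ → q = q' := by
    intro x hx q hq q' hq' he
    by_contra hne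
    exact hx (Set.mem_biUnion hq (Set.mem_biUnion hq' ⟨hne, he⟩))
  -- fundamental domain
  set D := ZSpan.fundamentalDomain b with hDdef
  have hDmeas : MeasurableSet D := ZSpan.fundamentalDomain_measurableSet b
  have hfd : MeasureTheory.IsAddFundamentalDomain
      (span ℤ (Set.range ⇑b)).toAddSubgroup D volume :=
    ZSpan.isAddFundamentalDomain' b volume
  haveI hGcount : Countable (span ℤ (Set.range ⇑b)).toAddSubgroup := by
    have := (hLspan ▸ hLc).to_subtype
    exact this
  -- the k-th order regions
  set Rk : EuclideanSpace ℝ (Fin 2) → Set (EuclideanSpace ℝ (Fin 2)) :=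
    fun y => {x | {q ∈ L | ‖x - q‖ < ‖x - y‖}.ncard = k - 1} with hRkdef
  have hrw : {x : EuclideanSpace ℝ (Fin 2) |
      {q ∈ L | q ≠ p ∧ ‖x - q‖ < ‖x - p‖}.ncard = k - 1} = Rk p := by
    ext x
    rw [Set.mem_setOf_eq, Stmt2Aux.closer_eq]
    rfl
  rw [hrw]
  have hpspan : p ∈ span ℤ (Set.range ⇑b) := by rw [hLspan] at hp; exact hp
  -- translation property
  have hvadd0 : ∀ g : EuclideanSpace ℝ (Fin 2), g ∈ span ℤ (Set.range ⇑b) →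
      ∀ y : EuclideanSpace ℝ (Fin 2), (g +ᵥ Rk y) = Rk (y + g) := by
    intro g hg y
    ext x
    rw [Set.mem_vadd_set_iff_neg_vadd_mem]
    have hneg : -g +ᵥ x = x - g := by rw [vadd_eq_add]; abel
    rw [hneg]
    have himg : {q ∈ L | ‖x - q‖ < ‖x - (y + g)‖}
        = (fun q => q + g) '' {q ∈ L | ‖(x - g) - q‖ < ‖(x - g) - y‖} := by
      ext q
      simp only [Set.mem_image, Set.mem_sep_iff]
      constructor
      · rintro ⟨hqL, hlt⟩
        refine ⟨q - g, ⟨?_, ?_⟩, sub_add_cancel q g⟩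
        · rw [hLspan] at hqL ⊢
          exact Submodule.sub_mem _ hqL hg
        · have h1 : (x - g) - (q - g) = x - q := by abel
          have h2 : (x - g) - y = x - (y + g) := by abel
          rw [h1, h2]; exact hlt
      · rintro ⟨r, ⟨hrL, hlt⟩, rfl⟩
        constructor
        · rw [hLspan] at hrL ⊢
          exact Submodule.add_mem _ hrL hg
        · have h1 : x - (r + g) = (x - g) - r := by abel
          have h2 : x - (y + g) = (x - g) - y := by abel
          rw [h1, h2]; exact hlt
    show ({q ∈ L | ‖(x - g) - q‖ < ‖(x - g) - y‖}.ncard = k - 1)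
      ↔ ({q ∈ L | ‖x - q‖ < ‖x - (y + g)‖}.ncard = k - 1)
    rw [himg, Set.ncard_image_of_injective _ (add_left_injective g)]
  have hvadd : ∀ g : (span ℤ (Set.range ⇑b)).toAddSubgroup,
      ∀ y : EuclideanSpace ℝ (Fin 2), (g +ᵥ Rk y) = Rk (y + ↑g) := by
    intro g y
    have hcoe : (g +ᵥ Rk y : Set (EuclideanSpace ℝ (Fin 2)))
        = ((g : EuclideanSpace ℝ (Fin 2)) +ᵥ Rk y) := rfl
    rw [hcoe]
    exact hvadd0 _ g.2 y
  -- reindexing equivalence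
  set e : (span ℤ (Set.range ⇑b)).toAddSubgroup ≃ ↥L :=
    { toFun := fun g => ⟨p + ↑g, by rw [hLspan]; exact Submodule.add_mem _ hpspan g.2⟩
      invFun := fun q => ⟨(↑q : EuclideanSpace ℝ (Fin 2)) - p, by
        have hq : (↑q : EuclideanSpace ℝ (Fin 2)) ∈
            (span ℤ (Set.range ⇑b) : Set (EuclideanSpace ℝ (Fin 2))) := by
          rw [← hLspan]; exact q.2
        exact Submodule.sub_mem _ hq hpspan⟩
      left_inv := fun g => Subtype.ext (by simp)
      right_inv := fun q => Subtype.ext (by simp) } with hedef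
  haveI hLsub : Countable ↥L := hLc.to_subtype
  have hmeasR : ∀ y : EuclideanSpace ℝ (Fin 2), MeasurableSet (Rk y) :=
    fun y => Stmt2Aux.measurable_region L hLc hLfin y (k - 1)
  calc volume (Rk p)
      = ∑' g : (span ℤ (Set.range ⇑b)).toAddSubgroup, volume ((g +ᵥ Rk p) ∩ D) :=
        hfd.measure_eq_tsum (Rk p)
    _ = ∑' g : (span ℤ (Set.range ⇑b)).toAddSubgroup, volume (Rk (p + ↑g) ∩ D) := by
        exact tsum_congr fun g => by rw [hvadd g p]
    _ = ∑' q : ↥L, volume (Rk ↑q ∩ D) := by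
        refine Equiv.tsum_eq e (fun q : ↥L => volume (Rk ↑q ∩ D)) ▸ tsum_congr fun g => ?_
        rfl
    _ = ∑' q : ↥L, volume (Rk ↑q ∩ (D \ Z)) := by
        refine tsum_congr fun q => ?_
        have h1 : Rk ↑q ∩ (D \ Z) = (Rk ↑q ∩ D) \ Z := by
          rw [Set.inter_diff_assoc]
        rw [h1, measure_diff_null hZnull]
    _ = volume (⋃ q : ↥L, Rk ↑q ∩ (D \ Z)) := by
        refine (measure_iUnion (ι := ↥L) ?_ fun q => (hmeasR ↑q).inter (hDmeas.diff hZmeas)).symm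
        intro q q' hne
        rw [Function.onFun, Set.disjoint_left]
        rintro x ⟨hx1, hxD, hxZ⟩ ⟨hx2, -, -⟩
        exact hne (Subtype.ext (Stmt2Aux.unique_kth L x (hLfin x) (hZx x hxZ) q.2 q'.2
          (hx1.trans hx2.symm)))
    _ = volume (D \ Z) := by
        congr 1
        refine subset_antisymm (Set.iUnion_subset fun q => Set.inter_subset_right) ?_
        intro x hx
        obtain ⟨p', hp'L, hp'card⟩ :=
          Stmt2Aux.exists_kth L x hLinf (hLfin x) (hZx x hx.2) (k - 1)
        exact Set.mem_iUnion.mpr ⟨⟨p', hp'L⟩, hp'card, hx⟩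
    _ = volume D := measure_diff_null hZnull
    _ = ENNReal.ofReal |v₁ 0 * v₂ 1 - v₁ 1 * v₂ 0| := by
        set b₀ := (EuclideanSpace.basisFun (Fin 2) ℝ).toBasis with hb₀
        rw [hDdef, ZSpan.measure_fundamentalDomain b volume b₀]
        have h1 : volume (ZSpan.fundamentalDomain b₀) = 1 := by
          have hset : ZSpan.fundamentalDomain b₀ =
              (MeasurableEquiv.toLp 2 (Fin 2 → ℝ)).symm ⁻¹'
                (Set.pi Set.univ fun _ => Set.Ico (0 : ℝ) 1) := by
            ext x
            simp only [ZSpan.fundamentalDomain, Set.mem_setOf_eq, Set.mem_preimage,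
              Set.mem_pi, Set.mem_univ, forall_true_left, hb₀,
              Module.Basis.equivFun_apply, OrthonormalBasis.coe_toBasis_repr_apply,
              EuclideanSpace.basisFun_repr]
            rfl
          rw [hset, (EuclideanSpace.volume_preserving_symm_measurableEquiv_toLp (Fin 2)).measure_preimage
            (MeasurableSet.univ_pi fun _ => measurableSet_Ico).nullMeasurableSet]
          rw [volume_pi_pi]
          simp [Real.volume_Ico]
        rw [h1, mul_one]
        congr 1
        rw [Module.Basis.det_apply, Matrix.det_fin_two]
        simp only [Module.Basis.toMatrix_apply, hb₀, OrthonormalBasis.coe_toBasis_repr_apply,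
          EuclideanSpace.basisFun_repr, hb]
        simp only [Matrix.cons_val_zero, Matrix.cons_val_one, Matrix.head_cons]
        ring_nf
end

section
/- Let v₁, v₂ ∈ ℝ² be linearly independent vectors and let L = {m·v₁ + n·v₂ : m, n ∈ ℤ} be the lattice they generate. For every lattice point p ∈ L and every integer k ≥ 1, the set R_{≤k}(p) = {x ∈ ℝ² : #{q ∈ L, q ≠ p : ‖x − q‖ < ‖x − p‖} ≤ k − 1}, i.e. the set of points for which p is among the k nearest lattice points, has Lebesgue measure equal to k·|det(v₁, v₂)|. -/
open MeasureTheory Set Pointwise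
open scoped ENNReal

section Counting

variable {α : Type*} {S : Set α} {d : α → ℝ}

noncomputable def rnk (S : Set α) (d : α → ℝ) (q : α) : ℕ :=
  {r ∈ S | d r < d q}.ncard

variable (hfin : ∀ c : ℝ, {r ∈ S | d r ≤ c}.Finite)

include hfin

lemma Nfin (q : α) : {r ∈ S | d r < d q}.Finite :=
  (hfin (d q)).subset (fun r hr => ⟨hr.1, hr.2.le⟩)

lemma rnk_lt_rnk {q r : α} (hq : q ∈ S) (h : d q < d r) :
    rnk S d q < rnk S d r := by
  have hss : {a ∈ S | d a < d q} ⊂ {a ∈ S | d a < d r} := by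
    constructor
    · exact fun a ha => ⟨ha.1, ha.2.trans h⟩
    · intro hsub
      exact absurd ((hsub ⟨hq, h⟩).2) (lt_irrefl _)
  exact Set.ncard_lt_ncard hss (Nfin hfin r)

lemma rnk_injOn (hd : Set.InjOn d S) : Set.InjOn (rnk S d) S := by
  intro q hq r hr hqr
  rcases lt_trichotomy (d q) (d r) with h | h | h
  · exact absurd hqr (Nat.ne_of_lt (rnk_lt_rnk hfin hq h))
  · exact hd hq hr h
  · exact absurd hqr.symm (Nat.ne_of_lt (rnk_lt_rnk hfin hr h))

lemma rnk_unbounded (hS : S.Infinite) (n : ℕ) : ∃ q ∈ S, n ≤ rnk S d q := by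
  obtain ⟨T, hTS, hTfin, hTcard⟩ := hS.exists_subset_ncard_eq n
  have hbdd : ∃ c : ℝ, ∀ r ∈ T, d r ≤ c := by
    rcases T.eq_empty_or_nonempty with rfl | hne
    · exact ⟨0, fun r hr => absurd hr (notMem_empty r)⟩
    · obtain ⟨a, _, hmax⟩ := Set.exists_max_image T d hTfin hne
      exact ⟨d a, hmax⟩
  obtain ⟨c, hc⟩ := hbdd
  have : ∃ q ∈ S, ¬ d q ≤ c := by
    by_contra h
    push_neg at h
    exact hS (hfin c |>.subset (fun r hr => ⟨hr, h r hr⟩))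
  obtain ⟨q, hq, hqc⟩ := this
  push_neg at hqc
  refine ⟨q, hq, ?_⟩
  rw [← hTcard, rnk]
  exact Set.ncard_le_ncard (fun r hr => ⟨hTS hr, (hc r hr).trans_lt hqc⟩) (Nfin hfin q)

lemma rnk_down (hd : Set.InjOn d S) :
    ∀ m : ℕ, ∀ q ∈ S, rnk S d q = m → ∀ n ≤ m, ∃ r ∈ S, rnk S d r = n := by
  intro m
  induction m using Nat.strong_induction_on with
  | _ m ih =>
    intro q hq hqm n hn
    rcases eq_or_lt_of_le hn with rfl | hlt
    · exact ⟨q, hq, hqm⟩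
    · have hfinN := Nfin hfin q
      have hcard : {a ∈ S | d a < d q}.ncard = m := hqm
      have hne : {a ∈ S | d a < d q}.Nonempty := by
        rw [← Set.ncard_pos hfinN]
        omega
      obtain ⟨r, hrN, hrmax⟩ := Set.exists_max_image _ d hfinN hne
      have hrS : r ∈ S := hrN.1
      have hNr : {a ∈ S | d a < d r} = {a ∈ S | d a < d q} \ {r} := by
        ext a
        simp only [mem_setOf_eq, mem_diff, mem_singleton_iff]
        constructor
        · intro ⟨haS, halt⟩
          exact ⟨⟨haS, halt.trans hrN.2⟩, fun h => absurd halt (by rw [h]; exact lt_irrefl _)⟩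
        · intro ⟨⟨haS, halt⟩, hane⟩
          refine ⟨haS, lt_of_le_of_ne (hrmax a ⟨haS, halt⟩) ?_⟩
          exact fun h => hane (hd haS hrS h)
      have hrrank : rnk S d r = m - 1 := by
        have h1 : rnk S d r = {a ∈ S | d a < d q}.ncard - 1 := by
          rw [rnk, hNr]
          exact Set.ncard_diff_singleton_of_mem hrN
        rw [h1, hcard]
      exact ih (m - 1) (by omega) r hrS hrrank n (by omega)

lemma rnk_count (hd : Set.InjOn d S) (hS : S.Infinite) (k : ℕ) :
    {q ∈ S | rnk S d q < k}.ncard = k ∧ {q ∈ S | rnk S d q < k}.Finite := by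
  set B := {q ∈ S | rnk S d q < k} with hB
  have himg : rnk S d '' B = Set.Iio k := by
    ext n
    simp only [mem_image, mem_Iio, hB, mem_setOf_eq]
    constructor
    · rintro ⟨q, ⟨_, hq⟩, rfl⟩; exact hq
    · intro hn
      obtain ⟨q, hq, hqn⟩ := rnk_unbounded hfin hS n
      obtain ⟨r, hrS, hrn⟩ := rnk_down hfin hd (rnk S d q) q hq rfl n hqn
      exact ⟨r, ⟨hrS, by omega⟩, hrn⟩
  have hinj : Set.InjOn (rnk S d) B := (rnk_injOn hfin hd).mono (fun q hq => hq.1)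
  have hcard : B.ncard = k := by
    rw [← Set.ncard_image_of_injOn hinj, himg,
      show (Set.Iio k) = ↑(Finset.Iio k) from (Finset.coe_Iio k).symm,
      Set.ncard_coe_finset, Nat.card_Iio]
  refine ⟨hcard, ?_⟩
  rcases Nat.eq_zero_or_pos k with rfl | hk
  · simp only [hB, Nat.not_lt_zero, and_false, setOf_false] at *
    exact Set.finite_empty
  · exact Set.finite_of_ncard_pos (by omega)

end Counting

noncomputable section LatticeSetup

open Submodule

abbrev E2' := EuclideanSpace ℝ (Fin 2)

variable (b : Module.Basis (Fin 2) ℝ E2')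

lemma Lb_closed : IsClosed (↑(span ℤ (Set.range ⇑b)) : Set E2') :=
  AddSubgroup.isClosed_of_discrete (H := (span ℤ (Set.range ⇑b)).toAddSubgroup)

lemma Lb_inter_finite (x : E2') (c : ℝ) :
    {r ∈ (↑(span ℤ (Set.range ⇑b)) : Set E2') | dist x r ≤ c}.Finite := by
  have h1 : {r ∈ (↑(span ℤ (Set.range ⇑b)) : Set E2') | dist x r ≤ c}
      = ↑(span ℤ (Set.range ⇑b)) ∩ Metric.closedBall x c := by
    ext r
    simp [Metric.mem_closedBall, dist_comm, and_comm]
  rw [h1]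
  have hcpt : IsCompact ((↑(span ℤ (Set.range ⇑b)) : Set E2') ∩ Metric.closedBall x c) :=
    (isCompact_closedBall x c).of_isClosed_subset
      ((Lb_closed b).inter Metric.isClosed_closedBall) inter_subset_right
  have : DiscreteTopology ↥((↑(span ℤ (Set.range ⇑b)) : Set E2') ∩ Metric.closedBall x c) :=
    DiscreteTopology.of_subset
      (inferInstanceAs (DiscreteTopology ↥(span ℤ (Set.range ⇑b))))
      inter_subset_left
  exact hcpt.finite (isDiscrete_iff_discreteTopology.mpr this)

lemma Lb_range_pair : Set.range ⇑b = {b 0, b 1} := by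
  ext r
  constructor
  · rintro ⟨i, rfl⟩
    fin_cases i
    · exact Or.inl rfl
    · exact Or.inr rfl
  · rintro (rfl | rfl)
    · exact ⟨0, rfl⟩
    · exact ⟨1, rfl⟩

lemma Lb_mem_iff (q : E2') :
    q ∈ (↑(span ℤ (Set.range ⇑b)) : Set E2') ↔ ∃ m n : ℤ, q = m • b 0 + n • b 1 := by
  rw [SetLike.mem_coe, Lb_range_pair, Submodule.mem_span_pair]
  constructor
  · rintro ⟨m, n, rfl⟩; exact ⟨m, n, rfl⟩
  · rintro ⟨m, n, rfl⟩; exact ⟨m, n, rfl⟩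

lemma Lb_infinite : (↑(span ℤ (Set.range ⇑b)) : Set E2').Infinite := by
  have hv₁ : b 0 ≠ 0 := b.ne_zero 0
  apply Set.infinite_of_injective_forall_mem
    (f := fun n : ℤ => (n : ℤ) • b 0) ?_ ?_
  · intro m n hmn
    simp only at hmn
    rw [← Int.cast_smul_eq_zsmul ℝ, ← Int.cast_smul_eq_zsmul ℝ] at hmn
    exact_mod_cast smul_left_injective ℝ hv₁ hmn
  · intro n
    rw [Lb_mem_iff]
    exact ⟨n, 0, by simp⟩

lemma Lb_countable : (↑(span ℤ (Set.range ⇑b)) : Set E2').Countable := by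
  have : (↑(span ℤ (Set.range ⇑b)) : Set E2')
      = Set.range (fun mn : ℤ × ℤ => (mn.1 : ℤ) • b 0 + (mn.2 : ℤ) • b 1) := by
    ext q
    rw [Lb_mem_iff]
    simp [Set.mem_range, Prod.exists, eq_comm]
  rw [this]
  exact Set.countable_range _

end LatticeSetup


noncomputable section Region

/-- The ≤k-th order region. -/
def Rgn (L : Set E2') (k : ℕ) (q : E2') : Set E2' :=
  {x | {r ∈ L | dist x r < dist x q}.ncard < k}

lemma Rgn_measurable (L : Set E2') (hLc : L.Countable) (k : ℕ)
    (hfin : ∀ (x : E2') (c : ℝ), {r ∈ L | dist x r ≤ c}.Finite) (q : E2') :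
    MeasurableSet (Rgn L k q) := by
  have hfin' : ∀ x : E2', {r ∈ L | dist x r < dist x q}.Finite := fun x =>
    (hfin x (dist x q)).subset (fun r hr => ⟨hr.1, hr.2.le⟩)
  have hrep : Rgn L k q =
      ⋂ t ∈ {t : Set E2' | t.Finite ∧ t ⊆ L ∧ t.ncard = k},
        ⋃ r ∈ t, {x | dist x q ≤ dist x r} := by
    ext x
    simp only [Rgn, mem_setOf_eq, mem_iInter, mem_iUnion]
    constructor
    · rintro hlt t ⟨htf, htL, htk⟩
      by_contra hcon
      push_neg at hcon
      have hsub : t ⊆ {r ∈ L | dist x r < dist x q} := fun r hr => ⟨htL hr, hcon r hr⟩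
      have := Set.ncard_le_ncard hsub (hfin' x)
      omega
    · intro h
      by_contra hcon
      push_neg at hcon
      obtain ⟨t, htsub, htk⟩ := Set.exists_subset_card_eq hcon
      obtain ⟨r, hrt, hrge⟩ := h t ⟨(hfin' x).subset htsub, htsub.trans (fun r hr => hr.1), htk⟩
      exact absurd (htsub hrt).2 (not_lt.mpr hrge)
  rw [hrep]
  have hTc : {t : Set E2' | t.Finite ∧ t ⊆ L ∧ t.ncard = k}.Countable := by
    apply (Set.countable_setOf_finite_subset hLc).mono
    intro t ht
    exact ⟨ht.1, ht.2.1⟩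
  exact MeasurableSet.biInter hTc (fun t ht =>
    ht.1.measurableSet_biUnion (fun r _ =>
      (isClosed_le (by fun_prop) (by fun_prop)).measurableSet))

lemma Rgn_vadd (L : Set E2') (k : ℕ) (p g : E2') (hg : ∀ r : E2', r ∈ L ↔ r + g ∈ L) :
    g +ᵥ Rgn L k p = Rgn L k (p + g) := by
  ext x
  rw [Set.mem_vadd_set_iff_neg_vadd_mem]
  have hx : -g +ᵥ x = x - g := by rw [vadd_eq_add]; abel
  rw [hx]
  simp only [Rgn, mem_setOf_eq]
  have himg : (fun r : E2' => r + g) '' {r ∈ L | dist (x - g) r < dist (x - g) p}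
      = {r ∈ L | dist x r < dist x (p + g)} := by
    ext r
    simp only [Set.mem_image, mem_setOf_eq]
    constructor
    · rintro ⟨a, ⟨haL, ha⟩, rfl⟩
      refine ⟨(hg a).mp haL, ?_⟩
      have h1 : dist x (a + g) = dist (x - g) a := by
        rw [dist_eq_norm, dist_eq_norm]; congr 1; abel
      have h2 : dist x (p + g) = dist (x - g) p := by
        rw [dist_eq_norm, dist_eq_norm]; congr 1; abel
      rw [h1, h2]; exact ha
    · rintro ⟨hrL, hr⟩
      refine ⟨r - g, ⟨?_, ?_⟩, by abel⟩
      · have := (hg (r - g)).mpr; simp only [sub_add_cancel] at this; exact this hrL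
      · have h1 : dist (x - g) (r - g) = dist x r := by
          rw [dist_eq_norm, dist_eq_norm]; congr 1; abel
        have h2 : dist (x - g) p = dist x (p + g) := by
          rw [dist_eq_norm, dist_eq_norm]; congr 1; abel
        rw [h1, h2]; exact hr
  rw [← himg, Set.ncard_image_of_injective _ (add_left_injective g)]

/-- The set of points equidistant from two distinct lattice points is null,
so a.e. point has injective distance function on a countable set. -/
lemma ae_injOn_dist (L : Set E2') (hLc : L.Countable) :
    ∀ᵐ x : E2', Set.InjOn (fun r => dist x r) L := by
  have hnull : volume (⋃ z ∈ {z : E2' × E2' | z.1 ∈ L ∧ z.2 ∈ L ∧ z.1 ≠ z.2},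
      (AffineSubspace.perpBisector z.1 z.2 : Set E2')) = 0 := by
    have hc : {z : E2' × E2' | z.1 ∈ L ∧ z.2 ∈ L ∧ z.1 ≠ z.2}.Countable :=
      (hLc.prod hLc).mono (fun z hz => Set.mem_prod.mpr ⟨hz.1, hz.2.1⟩)
    rw [measure_biUnion_null_iff hc]
    rintro z ⟨_, _, hne⟩
    exact Measure.addHaar_affineSubspace volume _
      (fun h => hne (AffineSubspace.perpBisector_eq_top.mp h))
  rw [ae_iff]
  apply measure_mono_null _ hnull
  intro x hx
  simp only [mem_setOf_eq] at hx
  rw [Set.InjOn] at hx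
  push_neg at hx
  obtain ⟨q, hq, r, hr, hd, hne⟩ := hx
  exact Set.mem_biUnion (show (q, r) ∈ _ from ⟨hq, hr, hne⟩)
    (AffineSubspace.mem_perpBisector_iff_dist_eq.mpr hd)

end Region

open Submodule in
set_option maxHeartbeats 1000000 in
lemma main_aux (b : Module.Basis (Fin 2) ℝ E2') (p : E2')
    (hpΛ : p ∈ span ℤ (Set.range ⇑b)) (k : ℕ) (hk : 1 ≤ k) :
    volume (Rgn (↑(span ℤ (Set.range ⇑b))) k p)
      = (k : ℝ≥0∞) * volume (ZSpan.fundamentalDomain b) := by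
  classical
  have hLc := Lb_countable b
  have hLinf := Lb_infinite b
  have hfin := Lb_inter_finite b
  have hfund : IsAddFundamentalDomain (span ℤ (Set.range ⇑b)).toAddSubgroup
      (ZSpan.fundamentalDomain b) volume :=
    ZSpan.isAddFundamentalDomain' b volume
  haveI : Countable ↥(span ℤ (Set.range ⇑b)).toAddSubgroup := hLc.to_subtype
  have hRmeas : ∀ q : E2', MeasurableSet (Rgn (↑(span ℤ (Set.range ⇑b))) k q) :=
    Rgn_measurable _ hLc k hfin
  have hvadd : ∀ g : (span ℤ (Set.range ⇑b)).toAddSubgroup,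
      ((g : E2') +ᵥ Rgn (↑(span ℤ (Set.range ⇑b))) k p)
        = Rgn (↑(span ℤ (Set.range ⇑b))) k (p + g) := by
    intro g
    apply Rgn_vadd
    intro r
    constructor
    · intro hr; exact (span ℤ (Set.range ⇑b)).add_mem hr g.2
    · intro hr
      have := (span ℤ (Set.range ⇑b)).sub_mem hr g.2
      simpa using this
  -- a.e. count is k
  have hcount : ∀ᵐ x : E2',
      (∑' g : (span ℤ (Set.range ⇑b)).toAddSubgroup,
          (Rgn (↑(span ℤ (Set.range ⇑b))) k (p + g)).indicator (1 : E2' → ℝ≥0∞) x)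
        = (k : ℝ≥0∞) := by
    filter_upwards [ae_injOn_dist (↑(span ℤ (Set.range ⇑b))) hLc] with x hinj
    set L : Set E2' := ↑(span ℤ (Set.range ⇑b))
    set Bg := {g : (span ℤ (Set.range ⇑b)).toAddSubgroup | x ∈ Rgn L k (p + g)} with hBg
    have hBcount := rnk_count (S := L) (d := fun r => dist x r) (hfin x) hinj hLinf k
    have himgBg : (fun g : (span ℤ (Set.range ⇑b)).toAddSubgroup => p + (g : E2')) '' Bg
        = {q ∈ L | rnk L (fun r => dist x r) q < k} := by
      ext q
      simp only [Set.mem_image, hBg, mem_setOf_eq]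
      constructor
      · rintro ⟨g, hg, rfl⟩
        exact ⟨(span ℤ (Set.range ⇑b)).add_mem hpΛ g.2, hg⟩
      · rintro ⟨hqL, hq⟩
        refine ⟨⟨q - p, (span ℤ (Set.range ⇑b)).sub_mem hqL hpΛ⟩, ?_, ?_⟩
        · show x ∈ Rgn L k (p + (q - p))
          rw [show p + (q - p) = q by rw [add_comm]; exact sub_add_cancel q p]
          exact hq
        · show p + (q - p) = q
          rw [add_comm]; exact sub_add_cancel q p
    have hginj : Function.Injective
        (fun g : (span ℤ (Set.range ⇑b)).toAddSubgroup => p + (g : E2')) := by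
      intro g h hgh
      simp only [add_right_inj] at hgh
      exact Subtype.coe_injective hgh
    have hBgcard : Bg.ncard = k := by
      rw [← Set.ncard_image_of_injective Bg hginj, himgBg, hBcount.1]
    have hBgfin : Bg.Finite := by
      apply Set.Finite.of_finite_image _ (hginj.injOn)
      rw [himgBg]
      exact hBcount.2
    rw [tsum_eq_sum (s := hBgfin.toFinset) (by
      intro g hg
      simp only [Set.Finite.mem_toFinset, hBg, mem_setOf_eq] at hg
      exact Set.indicator_of_notMem hg _)]
    have : ∀ g ∈ hBgfin.toFinset,
        (Rgn L k (p + g)).indicator (1 : E2' → ℝ≥0∞) x = 1 := by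
      intro g hg
      simp only [Set.Finite.mem_toFinset, hBg, mem_setOf_eq] at hg
      exact Set.indicator_of_mem hg _
    have hcard' : hBgfin.toFinset.card = k := by
      rw [← Set.ncard_eq_toFinset_card _ hBgfin]
      exact hBgcard
    rw [Finset.sum_congr rfl this, Finset.sum_const, nsmul_eq_mul, mul_one, hcard']
  -- main computation
  rw [hfund.measure_eq_tsum (Rgn (↑(span ℤ (Set.range ⇑b))) k p)]
  have hterm : ∀ g : (span ℤ (Set.range ⇑b)).toAddSubgroup,
      volume ((g +ᵥ Rgn (↑(span ℤ (Set.range ⇑b))) k p) ∩ ZSpan.fundamentalDomain b)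
        = ∫⁻ x in ZSpan.fundamentalDomain b,
            (Rgn (↑(span ℤ (Set.range ⇑b))) k (p + g)).indicator (1 : E2' → ℝ≥0∞) x := by
    intro g
    have hvg : (g +ᵥ Rgn (↑(span ℤ (Set.range ⇑b))) k p : Set E2')
        = Rgn (↑(span ℤ (Set.range ⇑b))) k (p + g) := hvadd g
    rw [hvg, lintegral_indicator_one (hRmeas (p + g)),
      Measure.restrict_apply (hRmeas (p + g))]
  simp_rw [hterm]
  have hmeasf : ∀ g : (span ℤ (Set.range ⇑b)).toAddSubgroup,
      AEMeasurable (fun x : E2' =>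
        (Rgn (↑(span ℤ (Set.range ⇑b))) k (p + ↑g)).indicator (1 : E2' → ℝ≥0∞) x)
        (volume.restrict (ZSpan.fundamentalDomain b)) := by
    intro g
    apply Measurable.aemeasurable
    apply Measurable.indicator
    · exact measurable_one
    · exact hRmeas _
  have hswap := (lintegral_tsum hmeasf).symm
  rw [hswap]
  rw [setLIntegral_congr_fun_ae (ZSpan.fundamentalDomain_measurableSet b)
    (by filter_upwards [hcount] with x hx using fun _ => hx)]
  rw [setLIntegral_const]

open Submodule in
/-- In the lattice generated by linearly independent `v₁, v₂ ∈ ℝ²`, the set of points for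
which a lattice point `p` is among the `k` nearest lattice points has Lebesgue measure
`k·|det(v₁, v₂)|`. -/
theorem stmt_3 (v₁ v₂ : EuclideanSpace ℝ (Fin 2))
    (hindep : LinearIndependent ℝ ![v₁, v₂])
    (L : Set (EuclideanSpace ℝ (Fin 2)))
    (hL : L = {q | ∃ m n : ℤ, q = m • v₁ + n • v₂})
    (p : EuclideanSpace ℝ (Fin 2)) (hp : p ∈ L) (k : ℕ) (hk : 1 ≤ k) :
    volume {x : EuclideanSpace ℝ (Fin 2) |
        {q ∈ L | q ≠ p ∧ ‖x - q‖ < ‖x - p‖}.ncard ≤ k - 1}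
      = ENNReal.ofReal ((k : ℝ) * |v₁ 0 * v₂ 1 - v₁ 1 * v₂ 0|) := by
  classical
  have hb : ⇑(basisOfLinearIndependentOfCardEqFinrank hindep (by simp)) = ![v₁, v₂] :=
    coe_basisOfLinearIndependentOfCardEqFinrank hindep _
  generalize hbb : basisOfLinearIndependentOfCardEqFinrank hindep (by simp : _) = b at hb
  have hb0 : b 0 = v₁ := by rw [hb]; rfl
  have hb1 : b 1 = v₂ := by rw [hb]; rfl
  have hLΛ : L = (↑(span ℤ (Set.range ⇑b)) : Set E2') := by
    rw [hL]
    ext q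
    rw [Lb_mem_iff b q, hb0, hb1]
    rfl
  have hpΛ : p ∈ span ℤ (Set.range ⇑b) := by rw [hLΛ] at hp; exact hp
  -- rewrite the set as Rgn L k p
  have hset : {x : E2' | {q ∈ L | q ≠ p ∧ ‖x - q‖ < ‖x - p‖}.ncard ≤ k - 1}
      = Rgn L k p := by
    ext x
    simp only [mem_setOf_eq, Rgn]
    have hsep : {q ∈ L | q ≠ p ∧ ‖x - q‖ < ‖x - p‖} = {r ∈ L | dist x r < dist x p} := by
      ext r
      simp only [mem_setOf_eq, dist_eq_norm]
      constructor
      · rintro ⟨h1, _, h3⟩; exact ⟨h1, h3⟩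
      · rintro ⟨h1, h3⟩
        exact ⟨h1, fun h => by rw [h] at h3; exact absurd h3 (lt_irrefl _), h3⟩
    rw [hsep]
    exact (Nat.lt_iff_le_pred hk).symm
  rw [hset, hLΛ, main_aux b p hpΛ k hk]
  -- volume of fundamental domain
  have hFvol : volume (ZSpan.fundamentalDomain b)
      = ENNReal.ofReal |v₁ 0 * v₂ 1 - v₁ 1 * v₂ 0| := by
    set b₀ := (EuclideanSpace.basisFun (Fin 2) ℝ).toBasis with hb₀
    rw [ZSpan.measure_fundamentalDomain b volume b₀]
    have hvol1 : volume (ZSpan.fundamentalDomain b₀) = 1 := by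
      rw [measure_congr (ZSpan.fundamentalDomain_ae_parallelepiped b₀ volume)]
      exact (EuclideanSpace.basisFun (Fin 2) ℝ).volume_parallelepiped
    rw [hvol1, mul_one]
    congr 1
    rw [Module.Basis.det_apply, Matrix.det_fin_two]
    have hM : ∀ i j, b₀.toMatrix ⇑b i j = (b j) i := by
      intro i j
      rw [Module.Basis.toMatrix_apply, hb₀]
      simp [EuclideanSpace.basisFun, OrthonormalBasis.coe_toBasis_repr_apply]
    rw [hM 0 0, hM 0 1, hM 1 0, hM 1 1, hb0, hb1]
    ring_nf
  rw [hFvol, ← ENNReal.ofReal_natCast k, ← ENNReal.ofReal_mul (by positivity)]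
end

section
/- Let λ_A > 0, λ_B > 0, let k ≥ 1 be an integer and set λ = λ_A/λ_B. The second moment of the compound Poisson–Erlang distribution equals ∑_{n=0}^∞ n² · (Γ(2k+n)/(n!·Γ(2k))) · (2λ_B)^{2k} λ_A^n / (2λ_B + λ_A)^{2k+n} = kλ·(1 + kλ + λ/2); consequently its variance equals kλ + kλ²/2. -/
open Real

lemma nat_choose_id (m n : ℕ) :
    n ^ 2 * (n + m).choose m
      = (m + 1) * (m + 2) * ((n + m).choose (m + 2))
        + (m + 1) * ((n + m).choose (m + 1)) := by
  have h1 : (n + m).choose (m + 1) * (m + 1) = (n + m).choose m * n := by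
    rw [Nat.choose_succ_right_eq]
    congr 1
    omega
  have h2 : (n + m).choose (m + 2) * (m + 2) = (n + m).choose (m + 1) * (n - 1) := by
    rw [Nat.choose_succ_right_eq]
    congr 1
    omega
  cases n with
  | zero => simp [Nat.choose_eq_zero_of_lt]
  | succ p =>
    have hsub : p + 1 - 1 = p := rfl
    rw [hsub] at h2
    nlinarith [h1, h2]

lemma hasSum_sq_choose (m : ℕ) {t : ℝ} (h0 : 0 ≤ t) (h1 : t < 1) :
    HasSum (fun n : ℕ => ((n : ℝ) ^ 2 * ((n + m).choose m : ℝ)) * t ^ n)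
      ((m + 1) * (m + 2) * t ^ 2 / (1 - t) ^ (m + 3)
        + (m + 1) * t / (1 - t) ^ (m + 2)) := by
  have ht : ‖t‖ < 1 := by rw [Real.norm_eq_abs, abs_of_nonneg h0]; exact h1
  have hA := hasSum_choose_mul_geometric_of_norm_lt_one (𝕜 := ℝ) (m + 1) ht
  have hB := hasSum_choose_mul_geometric_of_norm_lt_one (𝕜 := ℝ) (m + 2) ht
  -- shifted sum for choose (m+1)
  have hf : HasSum (fun n : ℕ => ((n + m).choose (m + 1) : ℝ) * t ^ n)
      (t * (1 / (1 - t) ^ (m + 2))) := by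
    refine (hasSum_nat_add_iff' (f := fun n : ℕ => ((n + m).choose (m + 1) : ℝ) * t ^ n)
      (g := t * (1 / (1 - t) ^ (m + 2))) 1).mp ?_
    have hfun : (fun n : ℕ => ((n + 1 + m).choose (m + 1) : ℝ) * t ^ (n + 1))
        = fun n : ℕ => t * (((n + (m + 1)).choose (m + 1) : ℝ) * t ^ n) := by
      funext n
      rw [show n + 1 + m = n + (m + 1) from by omega, pow_succ]
      ring
    have z1 : m.choose (m + 1) = 0 := Nat.choose_eq_zero_of_lt (by omega)
    have hstep := hfun ▸ (hA.mul_left t)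
    simpa [z1] using hstep
  have hg : HasSum (fun n : ℕ => ((n + m).choose (m + 2) : ℝ) * t ^ n)
      (t ^ 2 * (1 / (1 - t) ^ (m + 3))) := by
    refine (hasSum_nat_add_iff' (f := fun n : ℕ => ((n + m).choose (m + 2) : ℝ) * t ^ n)
      (g := t ^ 2 * (1 / (1 - t) ^ (m + 3))) 2).mp ?_
    have hfun : (fun n : ℕ => ((n + 2 + m).choose (m + 2) : ℝ) * t ^ (n + 2))
        = fun n : ℕ => t ^ 2 * (((n + (m + 2)).choose (m + 2) : ℝ) * t ^ n) := by
      funext n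
      rw [show n + 2 + m = n + (m + 2) from by omega, show t ^ (n + 2) = t ^ 2 * t ^ n from by ring]
      ring
    have z1 : m.choose (m + 2) = 0 := Nat.choose_eq_zero_of_lt (by omega)
    have z2 : (1 + m).choose (m + 2) = 0 := Nat.choose_eq_zero_of_lt (by omega)
    have hstep := hfun ▸ (hB.mul_left (t ^ 2))
    simpa [Finset.sum_range_succ, z1, z2] using hstep
  have hcomb := (hg.mul_left (((m : ℝ) + 1) * ((m : ℝ) + 2))).add (hf.mul_left ((m : ℝ) + 1))
  have hfun2 : (fun n : ℕ => ((n : ℝ) ^ 2 * ((n + m).choose m : ℝ)) * t ^ n)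
      = fun n : ℕ => ((m : ℝ) + 1) * ((m : ℝ) + 2) * (((n + m).choose (m + 2) : ℝ) * t ^ n)
        + ((m : ℝ) + 1) * (((n + m).choose (m + 1) : ℝ) * t ^ n) := by
    funext n
    have hc : ((n : ℝ) ^ 2 * ((n + m).choose m : ℝ))
        = ((m : ℝ) + 1) * ((m : ℝ) + 2) * ((n + m).choose (m + 2) : ℝ)
          + ((m : ℝ) + 1) * ((n + m).choose (m + 1) : ℝ) := by
      exact_mod_cast congrArg (fun x : ℕ => (x : ℝ)) (nat_choose_id m n)
    linear_combination t ^ n * hc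
  rw [hfun2]
  convert hcomb using 1
  · rfl
  · ring

/-- The second moment of the compound Poisson–Erlang distribution equals
`kλ(1 + kλ + λ/2)` and its variance equals `kλ + kλ²/2`, where `λ = λ_A/λ_B`. -/
theorem stmt_9 (lamA lamB : ℝ) (hlamA : 0 < lamA) (hlamB : 0 < lamB)
    (k : ℕ) (hk : 1 ≤ k) (lam : ℝ) (hlam : lam = lamA / lamB) :
    (∑' n : ℕ, (n : ℝ) ^ 2 * (Real.Gamma (2 * k + n) / (n.factorial * Real.Gamma (2 * k)) *
        ((2 * lamB) ^ (2 * k) * lamA ^ n / (2 * lamB + lamA) ^ (2 * k + n)))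
      = k * lam * (1 + k * lam + lam / 2)) ∧
    (∑' n : ℕ, (n : ℝ) ^ 2 * (Real.Gamma (2 * k + n) / (n.factorial * Real.Gamma (2 * k)) *
        ((2 * lamB) ^ (2 * k) * lamA ^ n / (2 * lamB + lamA) ^ (2 * k + n)))
      - (k * lam) ^ 2 = k * lam + k * lam ^ 2 / 2) := by
  obtain ⟨m, hm⟩ : ∃ m, 2 * k = m + 1 := ⟨2 * k - 1, by omega⟩
  set c : ℝ := 2 * lamB + lamA with hc
  have hcpos : 0 < c := by positivity
  set t : ℝ := lamA / c with htdef
  have ht0 : 0 ≤ t := by positivity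
  have ht1 : t < 1 := by
    rw [htdef, div_lt_one hcpos]; linarith
  have h1t : 1 - t = 2 * lamB / c := by
    rw [htdef]
    field_simp
    rw [hc]
    ring
  have h1tpos : 0 < 1 - t := by linarith
  -- main HasSum
  have key := (hasSum_sq_choose m ht0 ht1).mul_left ((1 - t) ^ (2 * k))
  have heq : (fun n : ℕ => (n : ℝ) ^ 2 * (Real.Gamma (2 * k + n) / (n.factorial * Real.Gamma (2 * k)) *
        ((2 * lamB) ^ (2 * k) * lamA ^ n / (2 * lamB + lamA) ^ (2 * k + n))))
      = fun n : ℕ => (1 - t) ^ (2 * k) * (((n : ℝ) ^ 2 * ((n + m).choose m : ℝ)) * t ^ n) := by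
    funext n
    have hG1 : Real.Gamma (2 * (k : ℝ) + n) = ((m + n).factorial : ℝ) := by
      have harg : (2 * (k : ℝ) + n) = ((m + n : ℕ) : ℝ) + 1 := by
        have : ((2 * k : ℕ) : ℝ) = (m : ℝ) + 1 := by exact_mod_cast congrArg (fun x : ℕ => (x : ℝ)) hm
        push_cast at this ⊢
        linarith
      rw [harg, Real.Gamma_nat_eq_factorial]
    have hG2 : Real.Gamma (2 * (k : ℝ)) = (m.factorial : ℝ) := by
      have harg : (2 * (k : ℝ)) = (m : ℝ) + 1 := by
        have : ((2 * k : ℕ) : ℝ) = (m : ℝ) + 1 := by exact_mod_cast congrArg (fun x : ℕ => (x : ℝ)) hm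
        push_cast at this
        linarith
      rw [harg, Real.Gamma_nat_eq_factorial]
    have hchoose : ((n + m).choose m : ℝ) = ((n + m).factorial : ℝ) / ((m.factorial : ℝ) * (n.factorial : ℝ)) := by
      rw [Nat.cast_choose ℝ (Nat.le_add_left m n), Nat.add_sub_cancel]
    rw [hG1, hG2, hchoose, h1t, htdef]
    have hmn : m + n = n + m := by omega
    rw [hmn]
    have hne1 : (c : ℝ) ≠ 0 := ne_of_gt hcpos
    have hne2 : ((n + m).factorial : ℝ) ≠ 0 := by positivity
    have hne3 : (m.factorial : ℝ) ≠ 0 := by positivity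
    have hne4 : ((n : ℕ).factorial : ℝ) ≠ 0 := by positivity
    have hcpow : c ^ (2 * k + n) = c ^ (2 * k) * c ^ n := pow_add c (2 * k) n
    rw [hcpow]
    field_simp
    rw [div_pow, div_pow]
    field_simp
  rw [heq] at *
  have htsum := (key.tsum_eq)
  have hval : (1 - t) ^ (2 * k) * ((m + 1) * (m + 2) * t ^ 2 / (1 - t) ^ (m + 3)
        + (m + 1) * t / (1 - t) ^ (m + 2))
      = k * lam * (1 + k * lam + lam / 2) := by
    have hmr : (m : ℝ) = 2 * k - 1 := by
      have : ((2 * k : ℕ) : ℝ) = (m : ℝ) + 1 := by exact_mod_cast congrArg (fun x : ℕ => (x : ℝ)) hm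
      push_cast at this
      linarith
    have e1 : m + 3 = 2 * k + 2 := by omega
    have e2 : m + 2 = 2 * k + 1 := by omega
    rw [e1, e2, hmr]
    have hp1 : (1 - t) ^ (2 * k + 2) = (1 - t) ^ (2 * k) * (1 - t) ^ 2 := pow_add _ _ _
    have hp2 : (1 - t) ^ (2 * k + 1) = (1 - t) ^ (2 * k) * (1 - t) := pow_succ _ _
    rw [hp1, hp2]
    have hne : (1 - t) ≠ 0 := ne_of_gt h1tpos
    have hnep : (1 - t) ^ (2 * k) ≠ 0 := pow_ne_zero _ hne
    have hcne : c ≠ 0 := ne_of_gt hcpos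
    have hbne : (2 * lamB) ≠ 0 := by positivity
    have hrat : t / (1 - t) = lam / 2 := by
      rw [htdef, h1t, hlam]
      rw [div_div_div_cancel_right₀ hcne, div_div]
      ring_nf
    have lhs_eq : (1 - t) ^ (2 * k) * ((2 * (k : ℝ) - 1 + 1) * (2 * (k : ℝ) - 1 + 2) * t ^ 2
          / ((1 - t) ^ (2 * k) * (1 - t) ^ 2)
        + (2 * (k : ℝ) - 1 + 1) * t / ((1 - t) ^ (2 * k) * (1 - t)))
        = (2 * (k : ℝ)) * (2 * (k : ℝ) + 1) * (t / (1 - t)) ^ 2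
          + (2 * (k : ℝ)) * (t / (1 - t)) := by
      field_simp
      ring
    rw [lhs_eq, hrat]
    ring
  constructor
  · rw [htsum, hval]
  · rw [htsum, hval]; ring
end
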